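/- If X is a countably based T0-space, then the image of the unit map η : X → K(X), x ↦ ↑{x}, is a Π⁰₂-subset of K(X). -/
import Mathlib


open Set Topology

/-- The lower powerspace: closed subsets of `X`. -/
def LowerPS (X : Type*) [TopologicalSpace X] : Type _ := {A : Set X // IsClosed A}

/-- Lower Vietoris topology, generated by the sets `◇U = {A | A ∩ U ≠ ∅}` for `U` open. -/
instance (X : Type*) [TopologicalSpace X] : TopologicalSpace (LowerPS X) :=
  .generateFrom {S | ∃ U : Set X, IsOpen U ∧ S = {A : LowerPS X | (A.1 ∩ U).Nonempty}}

/-- The upper powerspace: compact saturated subsets of `X`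
(saturated = intersection of all open neighborhoods). -/
def UpperPS (X : Type*) [TopologicalSpace X] : Type _ :=
  {K : Set X // IsCompact K ∧ K = ⋂₀ {U : Set X | IsOpen U ∧ K ⊆ U}}

/-- Upper Vietoris topology, generated by the sets `□U = {K | K ⊆ U}` for `U` open. -/
instance (X : Type*) [TopologicalSpace X] : TopologicalSpace (UpperPS X) :=
  .generateFrom {S | ∃ U : Set X, IsOpen U ∧ S = {K : UpperPS X | K.1 ⊆ U}}

/-- A `Π⁰₂` subset. -/
def IsPi02 {Y : Type*} [TopologicalSpace Y] (S : Set Y) : Prop :=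
  ∃ U V : ℕ → Set Y, (∀ i, IsOpen (U i)) ∧ (∀ i, IsOpen (V i)) ∧
    ∀ y, y ∈ S ↔ ∀ i, y ∈ U i → y ∈ V i

/-- The Scott topology on `P(ω)`, generated by the sets `{x | F ⊆ x}` for finite `F`. -/
instance : TopologicalSpace (Set ℕ) :=
  .generateFrom {S | ∃ F : Finset ℕ, S = {x : Set ℕ | ↑F ⊆ x}}

/-- A space is quasi-Polish iff it is homeomorphic to a `Π⁰₂` subspace of `P(ω)`
with the Scott topology. -/
def QuasiPolish (X : Type*) [TopologicalSpace X] : Prop :=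
  ∃ S : Set (Set ℕ), IsPi02 S ∧ Nonempty (X ≃ₜ S)

/-- Scott-open subsets of a preorder. -/
def IsScottOpen {α : Type*} [Preorder α] (U : Set α) : Prop :=
  (∀ ⦃a b : α⦄, a ≤ b → a ∈ U → b ∈ U) ∧
  ∀ d : Set α, d.Nonempty → DirectedOn (· ≤ ·) d → ∀ a : α, IsLUB d a → a ∈ U →
    (d ∩ U).Nonempty

/-- The Scott topology on a preorder. -/
def scottTop (α : Type*) [Preorder α] : TopologicalSpace α := .generateFrom {U | IsScottOpen U}

/-- The frame of open subsets of `X`, ordered by inclusion. -/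
def OpensT (X : Type*) [TopologicalSpace X] : Type _ := {U : Set X // IsOpen U}

instance (X : Type*) [TopologicalSpace X] : PartialOrder (OpensT X) :=
  inferInstanceAs (PartialOrder {U : Set X // IsOpen U})

/-- `O(X)` carries the Scott topology. -/
instance (X : Type*) [TopologicalSpace X] : TopologicalSpace (OpensT X) := scottTop (OpensT X)

/-- `□◇U` in `K(A(X))`. -/
def boxDia {X : Type*} [TopologicalSpace X] (U : Set X) : Set (UpperPS (LowerPS X)) :=
  {𝒦 | ∀ A ∈ 𝒦.1, ((A : LowerPS X).1 ∩ U).Nonempty}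

/-- `◇□U` in `A(K(X))`. -/
def diaBox {X : Type*} [TopologicalSpace X] (U : Set X) : Set (LowerPS (UpperPS X)) :=
  {𝒜 | ∃ K ∈ 𝒜.1, (K : UpperPS X).1 ⊆ U}

/-- A space is consonant iff every Scott-open family of opens containing `U` contains
a compact-saturated filter neighborhood `▽K` of `U`. -/
def Consonant (X : Type*) [TopologicalSpace X] : Prop :=
  ∀ H : Set (OpensT X), IsScottOpen H → ∀ U ∈ H,
    ∃ K : UpperPS X, K.1 ⊆ U.1 ∧ ∀ V : OpensT X, K.1 ⊆ V.1 → V ∈ H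

/-- A space is co-consonant. -/
def CoConsonant (Y : Type*) [TopologicalSpace Y] : Prop :=
  ∀ H : Set (OpensT Y), IsScottOpen H → ∀ U ∈ H,
    ∃ F : Finset (Set Y), (∀ A ∈ F, IsClosed A) ∧ (∀ A ∈ F, (U.1 ∩ A).Nonempty) ∧
      ∀ V : OpensT Y, (∀ A ∈ F, (V.1 ∩ A).Nonempty) → V ∈ H


/-- For a countably based T0-space, the image of the unit `x ↦ ↑{x}` (the saturation of
`{x}`, i.e. the intersection of all open neighborhoods of `x`) is a `Π⁰₂` subset of
`K(X)`. -/
theorem range_upper_unit_pi02 (X : Type*) [TopologicalSpace X]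
    [SecondCountableTopology X] [T0Space X] :
    IsPi02 {K : UpperPS X | ∃ x : X, K.1 = ⋂₀ {U : Set X | IsOpen U ∧ x ∈ U}} := by
  obtain ⟨b, hb⟩ : ∃ b : ℕ → Set X,
      insert ∅ (TopologicalSpace.countableBasis X) = Set.range b :=
    ((TopologicalSpace.countable_countableBasis X).insert ∅).exists_eq_range
      (Set.insert_nonempty _ _)
  have hbopen : ∀ n, IsOpen (b n) := by
    intro n
    have : b n ∈ insert ∅ (TopologicalSpace.countableBasis X) := hb ▸ Set.mem_range_self n
    rcases this with h | h
    · rw [h]; exact isOpen_empty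
    · exact TopologicalSpace.isOpen_of_mem_countableBasis h
  have hbasis : ∀ (x : X) (U : Set X), IsOpen U → x ∈ U → ∃ n, x ∈ b n ∧ b n ⊆ U := by
    intro x U hU hx
    obtain ⟨v, hv, hxv, hvU⟩ :=
      (TopologicalSpace.isBasis_countableBasis X).exists_subset_of_mem_open hx hU
    obtain ⟨n, rfl⟩ : v ∈ Set.range b := hb ▸ Set.mem_insert_of_mem _ hv
    exact ⟨n, hxv, hvU⟩
  obtain ⟨e, he⟩ := exists_surjective_nat (Finset ℕ)
  refine ⟨fun n => {K : UpperPS X | K.1 ⊆ ⋃ i ∈ e n, b i},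
    fun n => ⋃ i ∈ e n, {K : UpperPS X | K.1 ⊆ b i}, ?_, ?_, ?_⟩
  · intro n
    exact TopologicalSpace.isOpen_generateFrom_of_mem
      ⟨_, isOpen_biUnion (fun i _ => hbopen i), rfl⟩
  · intro n
    exact isOpen_biUnion fun i _ =>
      TopologicalSpace.isOpen_generateFrom_of_mem ⟨_, hbopen i, rfl⟩
  · intro K
    constructor
    · rintro ⟨x, hK⟩ n hsub
      have hxK : x ∈ K.1 := by
        rw [hK]; exact fun U hU => hU.2
      obtain ⟨i, hi, hxi⟩ := Set.mem_iUnion₂.1 (hsub hxK)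
      refine Set.mem_iUnion₂.2 ⟨i, hi, ?_⟩
      show K.1 ⊆ b i
      rw [hK]
      exact Set.sInter_subset_of_mem ⟨hbopen i, hxi⟩
    · intro P
      have key : ∃ x ∈ K.1, ∀ U : Set X, IsOpen U → x ∈ U → K.1 ⊆ U := by
        by_contra h
        push_neg at h
        have hpick : ∀ x ∈ K.1, ∃ i, x ∈ b i ∧ ¬ K.1 ⊆ b i := by
          intro x hx
          obtain ⟨U, hU, hxU, hnsub⟩ := h x hx
          obtain ⟨n, hxn, hnU⟩ := hbasis x U hU hxU
          exact ⟨n, hxn, fun hs => hnsub (hs.trans hnU)⟩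
        choose f hf1 hf2 using hpick
        obtain ⟨t, ht⟩ := K.2.1.elim_finite_subcover
          (fun x : K.1 => b (f x x.2)) (fun x => hbopen _)
          (fun y hy => Set.mem_iUnion.2 ⟨⟨y, hy⟩, hf1 y hy⟩)
        obtain ⟨n, hn⟩ := he (t.image (fun x : K.1 => f x x.2))
        have hcov : K.1 ⊆ ⋃ i ∈ e n, b i := by
          intro y hy
          obtain ⟨x, hxt, hyx⟩ := Set.mem_iUnion₂.1 (ht hy)
          exact Set.mem_iUnion₂.2 ⟨f x x.2, hn ▸ Finset.mem_image_of_mem _ hxt, hyx⟩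
        obtain ⟨i, hi, hKi⟩ := Set.mem_iUnion₂.1 (P n hcov)
        rw [hn] at hi
        obtain ⟨x, _, rfl⟩ := Finset.mem_image.1 hi
        exact hf2 x x.2 hKi
      obtain ⟨x, hxK, hx⟩ := key
      refine ⟨x, subset_antisymm ?_ ?_⟩
      · exact Set.subset_sInter fun U hU => hx U hU.1 hU.2
      · have h1 : ⋂₀ {U : Set X | IsOpen U ∧ x ∈ U} ⊆
            ⋂₀ {U : Set X | IsOpen U ∧ K.1 ⊆ U} :=
          Set.sInter_subset_sInter fun U hU => ⟨hU.1, hU.2 hxK⟩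
        exact h1.trans (K.2.2 ▸ subset_rfl)
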